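/- arXiv:1402.1854 — 3 statements merged into one kernel-verified Lean document; each statement's English description precedes it below -/
import Mathlib

section
/- For b a complex number with Re(b) > 0, the Fourier transform of the function h_b(t) = e^{-2πt} t^{b-1} for t > 0 and h_b(t) = 0 for t ≤ 0, namely ĥ_b(u) = ∫_{ℝ} h_b(t) e^{-2πitu} dt, equals (2π(1+iu))^{-b} Γ(b). -/
open Complex MeasureTheory Real

open Set Filter Metric in
private lemma hb_bound_integrable {s c : ℝ} (hs : -1 < s) (hc : 0 < c) :
    IntegrableOn (fun t : ℝ => t ^ s * Real.exp (-c * t)) (Set.Ioi 0) := by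
  have := integrableOn_rpow_mul_exp_neg_mul_rpow (p := 1) (s := s) (b := c) hs zero_lt_one hc
  simpa [Real.rpow_one] using this

open Set Filter Metric in
private lemma hb_meas (b : ℂ) (a : ℂ) :
    AEStronglyMeasurable (fun t : ℝ => (t : ℂ) ^ (b - 1) * Complex.exp (-(a * t)))
      (volume.restrict (Set.Ioi 0)) := by
  refine (ContinuousOn.mul ?_ ?_).aestronglyMeasurable measurableSet_Ioi
  · exact fun t ht => (Complex.continuousAt_ofReal_cpow_const t (b - 1)
      (Or.inr (ne_of_gt ht))).continuousWithinAt
  · fun_prop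

open Set Filter Metric in
private lemma hb_integrableOn (b : ℂ) (hb : 0 < b.re) {a : ℂ} (ha : 0 < a.re) :
    IntegrableOn (fun t : ℝ => (t : ℂ) ^ (b - 1) * Complex.exp (-(a * t))) (Set.Ioi 0) := by
  refine Integrable.mono (hb_bound_integrable (s := b.re - 1) (by linarith) ha)
    (hb_meas b a) ?_
  filter_upwards [ae_restrict_mem measurableSet_Ioi] with t ht
  rw [mem_Ioi] at ht
  rw [norm_mul, norm_cpow_eq_rpow_re_of_pos ht,
    Complex.norm_exp]
  have h1 : (-(a * t)).re = -a.re * t := by simp [Complex.mul_re]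
  rw [h1, sub_re, one_re, Real.norm_eq_abs,
    _root_.abs_of_nonneg (mul_nonneg (Real.rpow_nonneg ht.le _) (Real.exp_nonneg _))]

open Set Filter Metric in
private lemma hb_key (b : ℂ) (hb : 0 < b.re) {a : ℂ} (ha : 0 < a.re) :
    ∫ t in Set.Ioi (0 : ℝ), (t : ℂ) ^ (b - 1) * Complex.exp (-(a * t))
      = a ^ (-b) * Complex.Gamma b := by
  set f : ℂ → ℂ := fun a => ∫ t in Set.Ioi (0 : ℝ), (t : ℂ) ^ (b - 1) * Complex.exp (-(a * t))
  set g : ℂ → ℂ := fun a => a ^ (-b) * Complex.Gamma b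
  set U : Set ℂ := {a : ℂ | 0 < a.re}
  have hUo : IsOpen U := isOpen_lt continuous_const Complex.continuous_re
  -- f is differentiable on U
  have hf : DifferentiableOn ℂ f U := by
    intro a₀ ha₀
    have ha₀' : 0 < a₀.re := ha₀
    have hc : 0 < a₀.re / 2 := by positivity
    set ε : ℝ := a₀.re / 2
    have key := hasDerivAt_integral_of_dominated_loc_of_deriv_le (μ := volume.restrict (Set.Ioi 0))
      (F := fun (x : ℂ) (t : ℝ) => (t : ℂ) ^ (b - 1) * Complex.exp (-(x * t)))
      (F' := fun (x : ℂ) (t : ℝ) => (-t : ℂ) * ((t : ℂ) ^ (b - 1) * Complex.exp (-(x * t))))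
      (x₀ := a₀) (bound := fun t : ℝ => t ^ b.re * Real.exp (-ε * t)) (Metric.ball_mem_nhds a₀ hc)
      (Eventually.of_forall fun x => hb_meas b x) (hb_integrableOn b hb ha₀) ?_ ?_ ?_ ?_
    · exact key.2.differentiableAt.differentiableWithinAt
    · -- measurability of F' a₀
      exact (Complex.continuous_ofReal.aestronglyMeasurable.neg.mul (hb_meas b a₀))
    · -- bound
      filter_upwards [ae_restrict_mem measurableSet_Ioi] with t ht x hx
      rw [mem_Ioi] at ht
      have hxre : ε ≤ x.re := by
        have h1 : |(x - a₀).re| ≤ ‖x - a₀‖ := Complex.abs_re_le_norm _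
        have h2 : ‖x - a₀‖ < ε := by rwa [mem_ball, dist_eq_norm] at hx
        have := abs_le.mp (h1.trans h2.le)
        simp only [sub_re] at this
        have := this.1
        simp only [ε] at *
        linarith
      have hre : (-(x * (t : ℂ))).re = -x.re * t := by simp [Complex.mul_re]
      rw [norm_mul, norm_mul, ← Complex.ofReal_neg,
        Complex.norm_real, Real.norm_eq_abs, abs_neg, _root_.abs_of_nonneg ht.le,
        norm_cpow_eq_rpow_re_of_pos ht, Complex.norm_exp, hre,
        sub_re, one_re]
      have h1 : t * (t ^ (b.re - 1) * Real.exp (-x.re * t)) = t ^ b.re * Real.exp (-x.re * t) := by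
        rw [← mul_assoc, mul_comm t, ← Real.rpow_add_one (ne_of_gt ht), sub_add_cancel]
      rw [h1]
      have h2 : Real.exp (-x.re * t) ≤ Real.exp (-ε * t) := by
        apply Real.exp_le_exp.mpr
        nlinarith
      exact mul_le_mul_of_nonneg_left h2 (Real.rpow_nonneg ht.le _)
    · -- integrability of bound
      exact hb_bound_integrable (by linarith) hc
    · -- differentiability of F in x
      filter_upwards [ae_restrict_mem measurableSet_Ioi] with t ht x hx
      have h1 : HasDerivAt (fun x : ℂ => -(x * t)) (-t : ℂ) x := by
        exact ((hasDerivAt_id' x).mul_const (t : ℂ)).neg.congr_deriv (by simp)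
      have h2 : HasDerivAt (fun x : ℂ => Complex.exp (-(x * t)))
          (Complex.exp (-(x * t)) * (-t)) x := h1.cexp
      have := h2.const_mul ((t : ℂ) ^ (b - 1))
      exact this.congr_deriv (by ring)
  -- g is differentiable on U
  have hg : DifferentiableOn ℂ g U := by
    intro a ha
    refine DifferentiableAt.differentiableWithinAt ?_
    exact (differentiableAt_id.cpow (differentiableAt_const _) (Or.inl ha)).mul_const _
  -- they agree on positive reals
  have hreal : ∀ r : ℝ, 0 < r → f (r : ℂ) = g (r : ℂ) := by
    intro r hr
    have h2 := Complex.integral_cpow_mul_exp_neg_mul_Ioi (a := b) hb hr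
    simp only [f, g]
    rw [h2, one_div, inv_cpow _ _
      (by rw [Complex.arg_ofReal_of_nonneg hr.le]; exact Real.pi_ne_zero.symm), ← cpow_neg]
  have hfreq : ∃ᶠ z in nhdsWithin (1 : ℂ) {(1 : ℂ)}ᶜ, f z = g z := by
    have heq : ∀ n : ℕ, f (((1 + 1 / (n + 1) : ℝ)) : ℂ) = g (((1 + 1 / (n + 1) : ℝ)) : ℂ) :=
      fun n => hreal _ (by positivity)
    have htend : Tendsto (fun n : ℕ => (((1 + 1 / (n + 1) : ℝ)) : ℂ)) atTop
        (nhdsWithin (1 : ℂ) {(1 : ℂ)}ᶜ) := by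
      rw [tendsto_nhdsWithin_iff]
      constructor
      · have h0 : Tendsto (fun n : ℕ => (1 / ((n:ℝ) + 1) : ℝ)) atTop (nhds 0) :=
          tendsto_one_div_add_atTop_nhds_zero_nat
        have h1 : Tendsto (fun n : ℕ => (1 + 1 / ((n:ℝ) + 1) : ℝ)) atTop (nhds 1) := by
          simpa using (tendsto_const_nhds (x := (1:ℝ)) (f := atTop)).add h0
        have h2 := (Complex.continuous_ofReal.tendsto 1).comp h1
        simpa [Function.comp_def] using h2
      · refine Eventually.of_forall fun n => ?_
        simp only [Set.mem_compl_iff, Set.mem_singleton_iff]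
        intro h
        rw [show (1:ℂ) = ((1:ℝ):ℂ) by norm_num, Complex.ofReal_inj] at h
        have : (0:ℝ) < 1 / ((n : ℝ) + 1) := by positivity
        linarith [h]
    exact htend.frequently ((Eventually.of_forall heq).frequently)
  exact (hf.analyticOnNhd hUo).eqOn_of_preconnected_of_frequently_eq (hg.analyticOnNhd hUo)
    (convex_halfSpace_re_gt 0).isPreconnected (by simp [U] : (1:ℂ) ∈ U) hfreq ha

/-- Equation (2.9): the Fourier transform of `h_b(t) = e^{-2πt} t^{b-1}` (for `t > 0`,
zero otherwise) is `ĥ_b(u) = (2π(1+iu))^{-b} Γ(b)`, for `Re b > 0`. -/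
theorem fourier_transform_hb (b : ℂ) (hb : 0 < b.re) (u : ℝ) :
    ∫ t in Set.Ioi (0 : ℝ),
        (Real.exp (-2 * π * t) : ℂ) * (t : ℂ) ^ (b - 1) *
          Complex.exp (-2 * π * I * t * u)
      = (2 * π * (1 + I * u)) ^ (-b) * Complex.Gamma b := by
  set a : ℂ := 2 * π * (1 + I * u)
  have ha : 0 < a.re := by
    simp only [a]
    simp [Complex.mul_re, Complex.add_re, Complex.mul_im, Real.pi_pos]
  rw [show ∫ t in Set.Ioi (0 : ℝ),
        (Real.exp (-2 * π * t) : ℂ) * (t : ℂ) ^ (b - 1) * Complex.exp (-2 * π * I * t * u)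
      = ∫ t in Set.Ioi (0 : ℝ), (t : ℂ) ^ (b - 1) * Complex.exp (-(a * t)) from ?_,
    hb_key b hb ha]
  refine setIntegral_congr_fun measurableSet_Ioi fun t ht => ?_
  rw [Complex.ofReal_exp, mul_comm (Complex.exp _) _, mul_assoc, ← Complex.exp_add]
  congr 1
  simp only [a]
  push_cast
  ring_nf
end

section
/- Let f : ℍ → ℂ be holomorphic with f(z) = Σ_{n≥1} c_n e^{2πinz/H} for some H > 0, with coefficients c_n of polynomial growth |c_n| ≤ C n^A. Then for every complex s, the Mellin-type integral ∫_0^∞ f(iy) y^{s-1} dy converges absolutely for Re(s) > A+1, and the function s ↦ ∫_0^∞ f(iy) y^{s-1} dy extends to an entire function of s. -/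
open Complex MeasureTheory Real

private lemma me_pow_div_fact_le_exp (m : ℕ) {x : ℝ} (hx : 0 ≤ x) :
    x ^ m / m.factorial ≤ Real.exp x :=
  (Finset.single_le_sum (f := fun i => x ^ i / i.factorial)
    (fun i _ => by positivity) (Finset.self_mem_range_succ m)).trans
    (Real.sum_le_exp_of_nonneg hx (m + 1))

private lemma me_summable_maj (H : ℝ) (hH : 0 < H) (A C : ℝ) (hC : 0 ≤ C)
    (t : ℝ) (ht : 0 < t) :
    Summable (fun n : ℕ => C * ((n : ℝ) + 1) ^ A * Real.exp (-(2 * π * (n + 1) * t / H))) := by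
  set m : ℕ := ⌈A⌉₊ with hm
  have hAm : A ≤ (m : ℝ) := Nat.le_ceil A
  have hpoly : ∀ n : ℕ, ((n : ℝ) + 1) ^ A ≤ ((n : ℝ) + 1) ^ m := by
    intro n
    calc ((n : ℝ) + 1) ^ A ≤ ((n : ℝ) + 1) ^ (m : ℝ) :=
          Real.rpow_le_rpow_of_exponent_le (le_add_of_nonneg_left (Nat.cast_nonneg n)) hAm
      _ = ((n : ℝ) + 1) ^ m := Real.rpow_natCast _ m
  set r : ℝ := Real.exp (-(2 * π * t / H)) with hr
  have hr0 : 0 < r := Real.exp_pos _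
  have hr1 : r < 1 := by
    rw [hr, Real.exp_lt_one_iff]
    have : 0 < 2 * π * t / H := by positivity
    linarith
  have hrn : ∀ n : ℕ, Real.exp (-(2 * π * (n + 1) * t / H)) = r ^ (n + 1) := by
    intro n
    rw [hr, ← Real.exp_nat_mul]
    congr 1
    push_cast; ring
  have hbase : Summable (fun n : ℕ => (n : ℝ) ^ m * r ^ n) :=
    summable_pow_mul_geometric_of_norm_lt_one m (by rwa [Real.norm_eq_abs, abs_of_pos hr0])
  have hshift : Summable (fun n : ℕ => ((n : ℝ) + 1) ^ m * r ^ (n + 1)) := by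
    have := (summable_nat_add_iff (f := fun n : ℕ => (n : ℝ) ^ m * r ^ n) 1).2 hbase
    simpa using this
  apply Summable.of_nonneg_of_le (fun n => by positivity) (fun n => ?_) (hshift.mul_left C)
  rw [hrn n]
  have h1 : (0:ℝ) ≤ r ^ (n + 1) := by positivity
  calc C * ((n : ℝ) + 1) ^ A * r ^ (n + 1) ≤ C * ((n : ℝ) + 1) ^ m * r ^ (n + 1) :=
        mul_le_mul_of_nonneg_right (mul_le_mul_of_nonneg_left (hpoly n) hC) h1
    _ = C * (((n : ℝ) + 1) ^ m * r ^ (n + 1)) := by ring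

private lemma me_gbound (H : ℝ) (hH : 0 < H) (A C : ℝ) (hC : 0 ≤ C)
    (c : ℕ → ℂ) (hc : ∀ n : ℕ, 1 ≤ n → ‖c n‖ ≤ C * (n : ℝ) ^ A)
    (f : ℂ → ℂ)
    (hq : ∀ z : ℂ, 0 < z.im →
      f z = ∑' n : ℕ, c (n + 1) * Complex.exp (2 * π * I * (n + 1) * z / H)) :
    ∀ y : ℝ, 0 < y → ‖f (y * I)‖ ≤
      ∑' n : ℕ, C * ((n : ℝ) + 1) ^ A * Real.exp (-(2 * π * (n + 1) * y / H)) := by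
  have habs : ∀ (n : ℕ) (y : ℝ),
      ‖Complex.exp (2 * π * I * (n + 1) * ((y : ℂ) * I) / H)‖
        = Real.exp (-(2 * π * (n + 1) * y / H)) := by
    intro n y
    rw [show (2 * (π:ℂ) * I * (n + 1) * ((y:ℂ) * I) / H)
          = ((-(2 * π * (n + 1) * y / H) : ℝ) : ℂ) by
      push_cast
      linear_combination (2 * (π:ℂ) * (n + 1) * y / H) * Complex.I_sq]
    rw [Complex.norm_exp, Complex.ofReal_re]
  have hnorm_le : ∀ (n : ℕ) (y : ℝ),
      ‖c (n + 1) * Complex.exp (2 * π * I * (n + 1) * ((y : ℂ) * I) / H)‖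
        ≤ C * ((n : ℝ) + 1) ^ A * Real.exp (-(2 * π * (n + 1) * y / H)) := by
    intro n y
    rw [norm_mul, habs n y]
    apply mul_le_mul_of_nonneg_right _ (Real.exp_pos _).le
    have := hc (n + 1) (Nat.succ_le_succ (Nat.zero_le n))
    simpa using this
  intro y hy
  have hmaj : Summable (fun n : ℕ =>
      C * ((n : ℝ) + 1) ^ A * Real.exp (-(2 * π * (n + 1) * y / H))) :=
    me_summable_maj H hH A C hC y hy
  have hsumn : Summable (fun n : ℕ =>
      ‖c (n + 1) * Complex.exp (2 * π * I * (n + 1) * ((y : ℂ) * I) / H)‖) :=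
    Summable.of_nonneg_of_le (fun n => norm_nonneg _) (fun n => hnorm_le n y) hmaj
  rw [hq ((y : ℂ) * I) (by simpa using hy)]
  refine le_trans ?_ (Summable.tsum_le_tsum (fun n => hnorm_le n y) hsumn hmaj)
  exact norm_tsum_le_tsum_norm hsumn

/-- Mellin transform of a cusp-form-like function: if `f` is holomorphic on ℍ with
`q`-expansion `f(z) = Σ_{n≥1} c_n e^{2πinz/H}` whose coefficients have polynomial growth
`|c_n| ≤ C n^A`, and (as for a cusp form of weight `k`) `f(iy)` decays exponentially as
`y → 0⁺`, then `∫_0^∞ f(iy) y^{s-1} dy` converges absolutely for `Re s > A + 1` and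
extends to an entire function of `s`. -/
theorem mellin_entire (H : ℝ) (hH : 0 < H) (A C : ℝ) (hC : 0 ≤ C)
    (c : ℕ → ℂ) (hc : ∀ n : ℕ, 1 ≤ n → ‖c n‖ ≤ C * (n : ℝ) ^ A)
    (f : ℂ → ℂ) (hf : DifferentiableOn ℂ f {z : ℂ | 0 < z.im})
    (hq : ∀ z : ℂ, 0 < z.im →
      f z = ∑' n : ℕ, c (n + 1) * Complex.exp (2 * π * I * (n + 1) * z / H))
    (D d : ℝ) (hD : 0 < D) (hd : 0 < d)
    (hdecay0 : ∀ y : ℝ, 0 < y → y < 1 → ‖f (y * I)‖ ≤ D * Real.exp (-d / y)) :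
    (∀ s : ℂ, A + 1 < s.re →
        IntegrableOn (fun y : ℝ => f (y * I) * (y : ℂ) ^ (s - 1)) (Set.Ioi 0)) ∧
    ∃ F : ℂ → ℂ, Differentiable ℂ F ∧
      ∀ s : ℂ, A + 1 < s.re →
        F s = ∫ y in Set.Ioi (0 : ℝ), f (y * I) * (y : ℂ) ^ (s - 1) := by
  have hgb := me_gbound H hH A C hC c hc f hq
  -- the function on (0,∞)
  set g : ℝ → ℂ := fun y => f (y * I) with hgdef
  -- continuity, hence local integrability, on (0,∞)
  have hcont : ContinuousOn g (Set.Ioi 0) := by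
    apply (hf.continuousOn).comp
    · exact Continuous.continuousOn (by continuity)
    · intro y hy
      simpa using (hy : (0:ℝ) < y)
  have hloc : LocallyIntegrableOn g (Set.Ioi 0) :=
    hcont.locallyIntegrableOn measurableSet_Ioi
  -- exponential decay at infinity
  set E : ℝ := ∑' n : ℕ, C * ((n : ℝ) + 1) ^ A * Real.exp (-(π * (n + 1) / H)) with hE
  have hmajE : Summable (fun n : ℕ =>
      C * ((n : ℝ) + 1) ^ A * Real.exp (-(π * (n + 1) / H))) := by
    have := me_summable_maj H hH A C hC (1/2) (by norm_num)
    refine this.congr fun n => ?_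
    congr 2
    ring
  have htopbound : ∀ y : ℝ, 1 ≤ y → ‖g y‖ ≤ E * Real.exp (-(π / H) * y) := by
    intro y hy
    have hy0 : (0:ℝ) < y := lt_of_lt_of_le one_pos hy
    refine (hgb y hy0).trans ?_
    rw [hE, ← tsum_mul_right]
    refine Summable.tsum_le_tsum (fun n => ?_) (me_summable_maj H hH A C hC y hy0) ?_
    · have hkey : Real.exp (-(2 * π * (n + 1) * y / H))
          ≤ Real.exp (-(π * (n + 1) / H)) * Real.exp (-(π / H) * y) := by
        rw [← Real.exp_add]
        apply Real.exp_le_exp.2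
        have hn1 : (1:ℝ) ≤ (n : ℝ) + 1 := le_add_of_nonneg_left (Nat.cast_nonneg n)
        have h2 : ((n:ℝ) + 1) + y ≤ 2 * ((n:ℝ) + 1) * y := by nlinarith
        have hπH : 0 < π / H := by positivity
        calc -(2 * π * (n + 1) * y / H) = -(π / H) * (2 * ((n:ℝ)+1) * y) := by ring
          _ ≤ -(π / H) * (((n:ℝ) + 1) + y) := by
              apply mul_le_mul_of_nonpos_left h2 (by linarith)
          _ = -(π * (n + 1) / H) + -(π / H) * y := by ring
      calc C * ((n : ℝ) + 1) ^ A * Real.exp (-(2 * π * (n + 1) * y / H))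
          ≤ C * ((n : ℝ) + 1) ^ A * (Real.exp (-(π * (n + 1) / H)) * Real.exp (-(π / H) * y)) := by
            apply mul_le_mul_of_nonneg_left hkey (by positivity)
        _ = C * ((n : ℝ) + 1) ^ A * Real.exp (-(π * (n + 1) / H)) * Real.exp (-(π / H) * y) := by
            ring
    · exact hmajE.mul_right _
  have htop : g =O[Filter.atTop] fun y : ℝ => Real.exp (-(π / H) * y) := by
    rw [Asymptotics.isBigO_iff]
    refine ⟨E, Filter.eventually_atTop.2 ⟨1, fun y hy => ?_⟩⟩
    rw [Real.norm_eq_abs, abs_of_pos (Real.exp_pos _)]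
    exact htopbound y hy
  -- polynomial bound at 0 for every exponent
  have hbot : ∀ b : ℝ, g =O[nhdsWithin 0 (Set.Ioi 0)] fun y : ℝ => y ^ (-b) := by
    intro b
    set m : ℕ := ⌈-b⌉₊ with hm
    have hbm : -b ≤ (m : ℝ) := Nat.le_ceil _
    rw [Asymptotics.isBigO_iff]
    refine ⟨D * (m.factorial / d ^ m),
      Filter.eventually_of_mem (Ioo_mem_nhdsGT_of_mem (by norm_num : (0:ℝ) ∈ Set.Ico 0 1))
        fun y hy => ?_⟩
    obtain ⟨hy0, hy1⟩ := hy
    have hdy : 0 ≤ d / y := by positivity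
    have h1 : Real.exp (-d / y) ≤ m.factorial / d ^ m * y ^ m := by
      have h2 : (d / y) ^ m / m.factorial ≤ Real.exp (d / y) :=
        me_pow_div_fact_le_exp m hdy
      have hexp : 0 < Real.exp (d / y) := Real.exp_pos _
      have h3 : (d / y) ^ m / m.factorial * Real.exp (-d / y)
          ≤ Real.exp (d / y) * Real.exp (-d / y) :=
        mul_le_mul_of_nonneg_right h2 (Real.exp_pos _).le
      rw [← Real.exp_add] at h3
      have h4 : d / y + -d / y = 0 := by ring
      rw [h4, Real.exp_zero] at h3
      have hfac : (0:ℝ) < m.factorial := by positivity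
      have hdm : (0:ℝ) < d ^ m := by positivity
      have hym : (0:ℝ) < y ^ m := by positivity
      rw [div_pow, div_div] at h3
      -- h3 : d ^ m / (y ^ m * m.factorial) * exp (-d/y) ≤ 1
      rw [div_mul_eq_mul_div, div_le_one (by positivity)] at h3
      calc Real.exp (-d / y) = d ^ m * Real.exp (-d / y) / d ^ m := by
            field_simp
        _ ≤ y ^ m * m.factorial / d ^ m := (div_le_div_iff_of_pos_right hdm).2 h3
        _ = m.factorial / d ^ m * y ^ m := by ring
    have h5 : (y:ℝ) ^ m ≤ y ^ (-b) := by
      calc (y:ℝ) ^ m = y ^ (m : ℝ) := (Real.rpow_natCast _ m).symm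
        _ ≤ y ^ (-b) := Real.rpow_le_rpow_of_exponent_ge hy0 hy1.le hbm
    have hgy : ‖g y‖ ≤ D * Real.exp (-d / y) := hdecay0 y hy0 hy1
    rw [Real.norm_eq_abs, abs_of_pos (Real.rpow_pos_of_pos hy0 _)]
    calc ‖g y‖ ≤ D * Real.exp (-d / y) := hgy
      _ ≤ D * (m.factorial / d ^ m * y ^ m) := mul_le_mul_of_nonneg_left h1 hD.le
      _ ≤ D * (m.factorial / d ^ m * y ^ (-b)) := by
          apply mul_le_mul_of_nonneg_left _ hD.le
          apply mul_le_mul_of_nonneg_left h5 (by positivity)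
      _ = D * (m.factorial / d ^ m) * y ^ (-b) := by ring
  have hπH : 0 < π / H := by positivity
  constructor
  · intro s hs
    have := mellinConvergent_of_isBigO_rpow_exp hπH hloc htop (hbot (s.re - 1))
      (by linarith : s.re - 1 < s.re)
    rw [MellinConvergent] at this
    refine this.congr_fun (fun y hy => ?_) measurableSet_Ioi
    simp only [smul_eq_mul]
    ring
  · refine ⟨mellin g, fun s => ?_, fun s hs => ?_⟩
    · exact mellin_differentiableAt_of_isBigO_rpow_exp hπH hloc htop (hbot (s.re - 1))
        (by linarith : s.re - 1 < s.re)
    · rw [mellin]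
      apply setIntegral_congr_fun measurableSet_Ioi
      intro y hy
      simp only [smul_eq_mul]
      ring
end

section
/- Let g : (0,∞) → ℂ be continuous with g(y) = O(y^{-C}) as y → 0⁺ for some C > 0 and g(y) = O(e^{-cy}) as y → ∞ for some c > 0. Let ξ ∈ ℝ and let β ∈ ℂ with Re(β) sufficiently large (Re(β) > C). Then ∫_0^∞ g(y(1-iξ))·y^{β-1} dy = (1-iξ)^{-β} ∫_0^∞ g(u)·u^{β-1} du, provided g extends holomorphically to the sector {re^{iθ} : r > 0, |θ| ≤ |arg(1-iξ)|} with the same decay bounds uniformly in the sector. -/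
open Complex MeasureTheory Real
open Filter Set

lemma abs_le_abs_of_mem_uIcc {θ y : ℝ} (hy : y ∈ Set.uIcc 0 θ) : |y| ≤ |θ| := by
  rcases le_total 0 θ with h | h
  · rw [Set.uIcc_of_le h] at hy
    rw [_root_.abs_of_nonneg hy.1, _root_.abs_of_nonneg h]; exact hy.2
  · rw [Set.uIcc_of_ge h] at hy
    rw [_root_.abs_of_nonpos hy.2, _root_.abs_of_nonpos h]; exact neg_le_neg hy.1

lemma strip_shift (f : ℂ → ℂ) (θ : ℝ) (B : ℝ → ℝ)
    (hd : DifferentiableOn ℂ f {z : ℂ | z.im ∈ Set.uIcc 0 θ})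
    (hB : ∀ x y : ℝ, y ∈ Set.uIcc 0 θ → ‖f (x + y * I)‖ ≤ B x)
    (hBi : Integrable B)
    (htop : Tendsto B atTop (nhds 0))
    (hbot : Tendsto B atBot (nhds 0)) :
    (∫ x : ℝ, f (x + θ * I)) = ∫ x : ℝ, f x := by
  have hcont : ContinuousOn f {z : ℂ | z.im ∈ Set.uIcc 0 θ} := hd.continuousOn
  -- continuity and integrability of horizontal lines
  have hline : ∀ y : ℝ, y ∈ Set.uIcc 0 θ → Continuous fun x : ℝ => f (x + y * I) := by
    intro y hy
    apply hcont.comp_continuous (by continuity)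
    intro x
    simp [hy]
  have hint : ∀ y : ℝ, y ∈ Set.uIcc 0 θ → Integrable fun x : ℝ => f (x + y * I) := by
    intro y hy
    refine Integrable.mono' hBi ((hline y hy).aestronglyMeasurable) ?_
    exact Filter.Eventually.of_forall fun x => hB x y hy
  have h0 : (0:ℝ) ∈ Set.uIcc 0 θ := Set.left_mem_uIcc
  have hθ : θ ∈ Set.uIcc 0 θ := Set.right_mem_uIcc
  set v : ℝ → ℂ := fun t => ∫ y in (0:ℝ)..θ, f (t + y * I) with hv
  -- rectangle identity
  have rect : ∀ R : ℝ,
      (∫ x in (-R)..R, f x) - (∫ x in (-R)..R, f (x + θ * I)) = I • v (-R) - I • v R := by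
    intro R
    have := Complex.integral_boundary_rect_eq_zero_of_differentiableOn f
      (↑(-R)) (↑R + ↑θ * I) ?_
    · simp only [Complex.ofReal_neg, Complex.neg_re, Complex.ofReal_re, Complex.neg_im,
        Complex.ofReal_im, neg_zero, Complex.add_re, Complex.mul_re, Complex.I_re,
        Complex.I_im, Complex.add_im, Complex.mul_im] at this
      simp only [Complex.ofReal_zero, zero_mul, add_zero, mul_zero, mul_one, zero_sub,
        sub_zero, zero_add] at this
      have h1 : (∫ x in (-R)..R, f ↑x) - (∫ x in (-R)..R, f (↑x + ↑θ * I))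
          + I • v R - I • v (-R) = 0 := by
        convert this using 4 <;> push_cast <;> rfl
      linear_combination h1
    · refine hd.mono ?_
      intro z hz
      rw [Complex.mem_reProdIm] at hz
      have := hz.2
      simp only [Complex.ofReal_neg, Complex.neg_im, Complex.ofReal_im, neg_zero,
        Complex.add_im, Complex.mul_im, Complex.ofReal_re, Complex.I_im, Complex.I_re,
        Complex.mul_re, Complex.add_re] at this
      simpa using this
  -- vertical integrals tend to zero
  have hvb : ∀ t : ℝ, ‖v t‖ ≤ B t * |θ| := by
    intro t
    have : ‖v t‖ ≤ B t * |θ - 0| := by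
      apply intervalIntegral.norm_integral_le_of_norm_le_const
      intro y hy
      exact hB t y ((Set.uIoc_subset_uIcc hy))
    simpa using this
  have hvtop : Tendsto (fun R : ℝ => v R) atTop (nhds 0) := by
    apply squeeze_zero_norm hvb
    simpa using htop.mul_const |θ|
  have hvbot : Tendsto (fun R : ℝ => v (-R)) atTop (nhds 0) := by
    apply squeeze_zero_norm (fun R => hvb (-R))
    have : Tendsto (fun R : ℝ => B (-R)) atTop (nhds 0) :=
      hbot.comp tendsto_neg_atTop_atBot
    simpa using this.mul_const |θ|
  have h1 : Tendsto (fun R : ℝ => ∫ x in (-R)..R, f x) atTop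
      (nhds (∫ x : ℝ, f x)) := by
    have := hint 0 h0
    simp only [Complex.ofReal_zero, zero_mul, add_zero] at this
    exact intervalIntegral_tendsto_integral this tendsto_neg_atTop_atBot tendsto_id
  have h2 : Tendsto (fun R : ℝ => ∫ x in (-R)..R, f (x + θ * I)) atTop
      (nhds (∫ x : ℝ, f (x + θ * I))) :=
    intervalIntegral_tendsto_integral (hint θ hθ) tendsto_neg_atTop_atBot tendsto_id
  have hlim : Tendsto (fun R : ℝ => (∫ x in (-R)..R, f x) - ∫ x in (-R)..R, f (x + θ * I))
      atTop (nhds ((∫ x : ℝ, f x) - ∫ x : ℝ, f (x + θ * I))) := h1.sub h2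
  have hlim2 : Tendsto (fun R : ℝ => I • v (-R) - I • v R) atTop (nhds 0) := by
    have := ((hvbot.const_smul I).sub (hvtop.const_smul I))
    simpa using this
  have := tendsto_nhds_unique (hlim.congr (fun R => rect R)) hlim2
  have h3 : (∫ x : ℝ, f x) = ∫ x : ℝ, f (x + θ * I) := by
    linear_combination this
  exact h3.symm

lemma subst_exp (G : ℝ → ℂ) :
    ∫ u in Set.Ioi (0:ℝ), G u = ∫ x : ℝ, Real.exp x • G (Real.exp x) := by
  have h := integral_image_eq_integral_abs_deriv_smul MeasurableSet.univ
    (fun x _ => (Real.hasDerivAt_exp x).hasDerivWithinAt)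
    (Real.exp_injective.injOn) G
  rw [Set.image_univ, Real.range_exp] at h
  rw [h, setIntegral_univ]
  congr 1 with x
  rw [abs_of_pos (Real.exp_pos x)]

lemma arg_cexp {z : ℂ} (hz : |z.im| < π) : Complex.arg (Complex.exp z) = z.im := by
  have h := abs_lt.mp hz
  have hrepr : Complex.exp z = (Real.exp z.re : ℂ) *
      (Complex.cos z.im + Complex.sin z.im * I) := by
    conv_lhs => rw [← Complex.re_add_im z]
    rw [Complex.exp_add, Complex.exp_mul_I, ← Complex.ofReal_exp]
  rw [hrepr, Complex.arg_real_mul _ (Real.exp_pos _),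
    Complex.arg_cos_add_sin_mul_I ⟨h.1, h.2.le⟩]

/-- Contour rotation: if `g` is holomorphic on the sector
`{z ≠ 0 : |arg z| ≤ |arg(1-iξ)|}` with uniform bounds `‖g(z)‖ ≤ K|z|^{-C}` for `|z| ≤ 1`
and `‖g(z)‖ ≤ K e^{-c|z|}` for `|z| ≥ 1`, then for `Re β > C`,
`∫_0^∞ g(y(1-iξ)) y^{β-1} dy = (1-iξ)^{-β} ∫_0^∞ g(u) u^{β-1} du`. -/
theorem contour_rotation (g : ℂ → ℂ) (ξ : ℝ) (C c K : ℝ) (hC : 0 < C) (hc : 0 < c)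
    (hK : 0 < K) (β : ℂ) (hβ : C < β.re)
    (hg : DifferentiableOn ℂ g
      {z : ℂ | z ≠ 0 ∧ |Complex.arg z| ≤ |Complex.arg (1 - I * ξ)|})
    (hbound0 : ∀ z : ℂ, z ≠ 0 → |Complex.arg z| ≤ |Complex.arg (1 - I * ξ)| →
      ‖z‖ ≤ 1 → ‖g z‖ ≤ K * ‖z‖ ^ (-C))
    (hboundInf : ∀ z : ℂ, z ≠ 0 → |Complex.arg z| ≤ |Complex.arg (1 - I * ξ)| →
      1 ≤ ‖z‖ → ‖g z‖ ≤ K * Real.exp (-c * ‖z‖)) :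
    ∫ y in Set.Ioi (0 : ℝ), g ((y : ℂ) * (1 - I * ξ)) * (y : ℂ) ^ (β - 1)
      = (1 - I * ξ) ^ (-β) * ∫ u in Set.Ioi (0 : ℝ), g (u : ℂ) * (u : ℂ) ^ (β - 1) := by
  set w : ℂ := 1 - I * ξ with hwdef
  have hwre : w.re = 1 := by simp [hwdef]
  have hw0 : w ≠ 0 := fun h => by simp [h] at hwre
  set θ : ℝ := Complex.arg w with hθdef
  have hθ2 : |θ| < π / 2 := Complex.abs_arg_lt_pi_div_two_iff.mpr (Or.inl (by rw [hwre]; norm_num))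
  have hθπ : |θ| < π := hθ2.trans (by linarith [Real.pi_pos])
  set f : ℂ → ℂ := fun z => g (Complex.exp z) * Complex.exp (β * z) with hfdef
  -- exp maps the strip into the sector
  have hmaps : Set.MapsTo Complex.exp {z : ℂ | z.im ∈ Set.uIcc 0 θ}
      {z : ℂ | z ≠ 0 ∧ |Complex.arg z| ≤ |Complex.arg (1 - I * ξ)|} := by
    intro z hz
    have hy : |z.im| ≤ |θ| := abs_le_abs_of_mem_uIcc hz
    refine ⟨Complex.exp_ne_zero z, ?_⟩
    rw [arg_cexp (lt_of_le_of_lt hy hθπ)]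
    exact hy
  have hdf : DifferentiableOn ℂ f {z : ℂ | z.im ∈ Set.uIcc 0 θ} := by
    apply DifferentiableOn.mul
    · exact hg.comp Complex.differentiable_exp.differentiableOn hmaps
    · exact (Complex.differentiable_exp.comp ((differentiable_id.const_mul β))).differentiableOn
  -- the bound function
  set M : ℝ := Real.exp (|β.im| * |θ|) with hMdef
  have hM : 0 < M := Real.exp_pos _
  set D : ℝ := (β.re + 1) ^ 2 / c with hDdef
  set B : ℝ → ℝ := fun x =>
    if x ≤ 0 then K * M * Real.exp ((β.re - C) * x) else K * M * Real.exp (D - x) with hBdef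
  have hkey : ∀ x : ℝ, 0 ≤ x → (β.re + 1) * x ≤ c * Real.exp x + D := by
    intro x hx
    set s : ℝ := Real.exp (x / 2) with hsdef
    have hs1 : (1 : ℝ) ≤ s := Real.one_le_exp (by linarith)
    have hx2s : x ≤ 2 * s := by
      have := Real.add_one_le_exp (x / 2)
      linarith
    have hes : Real.exp x = s ^ 2 := by
      rw [sq, ← Real.exp_add, add_halves]
    have ha : (0 : ℝ) < β.re + 1 := by linarith
    rw [hes, hDdef]
    have hdc : (β.re + 1) ^ 2 / c * c = (β.re + 1) ^ 2 := div_mul_cancel₀ _ hc.ne'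
    nlinarith [sq_nonneg (c * s - (β.re + 1)), mul_le_mul_of_nonneg_left hx2s ha.le]
  have hB : ∀ x y : ℝ, y ∈ Set.uIcc 0 θ → ‖f (x + y * I)‖ ≤ B x := by
    intro x y hy
    have hyθ : |y| ≤ |θ| := abs_le_abs_of_mem_uIcc hy
    set z : ℂ := (x : ℂ) + y * I with hzdef
    have hzre : z.re = x := by simp [hzdef]
    have hzim : z.im = y := by simp [hzdef]
    have habs : ‖Complex.exp z‖ = Real.exp x := by rw [Complex.norm_exp, hzre]
    have harg : Complex.arg (Complex.exp z) = y := by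
      rw [arg_cexp (by rw [hzim]; exact lt_of_le_of_lt hyθ hθπ), hzim]
    have hargle : |Complex.arg (Complex.exp z)| ≤ |Complex.arg (1 - I * ξ)| := by
      rw [harg]; exact hyθ
    have hnorm : ‖f z‖ = ‖g (Complex.exp z)‖ * Real.exp (β.re * x - β.im * y) := by
      rw [hfdef]
      simp only [norm_mul, Complex.norm_exp]
      congr 2
      rw [Complex.mul_re, hzre, hzim]
    have hexpfac : Real.exp (β.re * x - β.im * y) ≤ Real.exp (β.re * x) * M := by
      rw [hMdef, ← Real.exp_add]
      apply Real.exp_le_exp.mpr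
      have : -(β.im * y) ≤ |β.im| * |θ| := by
        calc -(β.im * y) ≤ |β.im * y| := neg_le_abs _
          _ = |β.im| * |y| := abs_mul _ _
          _ ≤ |β.im| * |θ| := by gcongr
      linarith
    have hgnn : (0:ℝ) ≤ ‖g (Complex.exp z)‖ := norm_nonneg _
    rw [hnorm, hBdef]
    by_cases hx : x ≤ 0
    · simp only [hx, if_true]
      have hle1 : ‖Complex.exp z‖ ≤ 1 := by
        rw [habs]; exact Real.exp_le_one_iff.mpr hx
      have hgb : ‖g (Complex.exp z)‖ ≤ K * Real.exp (-C * x) := by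
        have := hbound0 _ (Complex.exp_ne_zero z) hargle hle1
        rwa [habs, Real.rpow_def_of_pos (Real.exp_pos x), Real.log_exp,
          mul_comm x (-C)] at this
      calc ‖g (Complex.exp z)‖ * Real.exp (β.re * x - β.im * y)
          ≤ (K * Real.exp (-C * x)) * (Real.exp (β.re * x) * M) := by
            exact mul_le_mul hgb hexpfac (Real.exp_pos _).le (by positivity)
        _ = K * M * Real.exp ((β.re - C) * x) := by
            rw [show (β.re - C) * x = -C * x + β.re * x by ring, Real.exp_add]
            ring
    · simp only [hx, if_false]
      push_neg at hx
      have hge1 : 1 ≤ ‖Complex.exp z‖ := by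
        rw [habs]; exact Real.one_le_exp hx.le
      have hgb : ‖g (Complex.exp z)‖ ≤ K * Real.exp (-c * Real.exp x) := by
        have := hboundInf _ (Complex.exp_ne_zero z) hargle hge1
        rwa [habs] at this
      have hexpo : β.re * x - c * Real.exp x ≤ D - x := by
        have := hkey x hx.le
        nlinarith
      calc ‖g (Complex.exp z)‖ * Real.exp (β.re * x - β.im * y)
          ≤ (K * Real.exp (-c * Real.exp x)) * (Real.exp (β.re * x) * M) := by
            exact mul_le_mul hgb hexpfac (Real.exp_pos _).le (by positivity)
        _ = K * M * Real.exp (β.re * x - c * Real.exp x) := by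
            rw [show β.re * x - c * Real.exp x = -c * Real.exp x + β.re * x by ring,
              Real.exp_add]
            ring
        _ ≤ K * M * Real.exp (D - x) := by
            have := Real.exp_le_exp.mpr hexpo
            have hKM : (0:ℝ) ≤ K * M := by positivity
            exact mul_le_mul_of_nonneg_left this hKM
  -- integrability of B
  have hb1 : (0:ℝ) < β.re - C := by linarith
  have hBi : Integrable B := by
    rw [← integrableOn_univ, ← Set.Iic_union_Ioi (a := (0:ℝ)), integrableOn_union]
    constructor
    · have h1 : IntegrableOn (fun x : ℝ => K * M * Real.exp ((β.re - C) * x)) (Set.Iic 0) := by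
        have h3 : IntegrableOn (fun x : ℝ => Real.exp ((β.re - C) * x)) (Set.Iic 0) := by
          rw [← Measure.map_neg_eq_self (volume : Measure ℝ)]
          have m : MeasurableEmbedding fun x : ℝ => -x :=
            (Homeomorph.neg ℝ).measurableEmbedding
          rw [m.integrableOn_map_iff]
          simp_rw [Function.comp_def, neg_preimage, Set.neg_Iic, neg_zero]
          apply (integrableOn_Ici_iff_integrableOn_Ioi (by finiteness)).mpr
          have h2 : IntegrableOn (fun x : ℝ => Real.exp (-(β.re - C) * x)) (Set.Ioi 0) :=
            exp_neg_integrableOn_Ioi 0 hb1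
          refine h2.congr_fun (fun x _ => by congr 1; ring) measurableSet_Ioi
        exact h3.const_mul _
      exact h1.congr_fun (fun x hx => by simp [hBdef, hx.out]) measurableSet_Iic
    · have h1 : IntegrableOn (fun x : ℝ => K * M * Real.exp (D - x)) (Set.Ioi 0) := by
        have h2 : IntegrableOn (fun x : ℝ => Real.exp (-(1:ℝ) * x)) (Set.Ioi 0) :=
          exp_neg_integrableOn_Ioi 0 one_pos
        have h3 : IntegrableOn (fun x : ℝ => K * M * Real.exp D * Real.exp (-(1:ℝ) * x))
            (Set.Ioi 0) := h2.const_mul _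
        refine h3.congr_fun (fun x _ => ?_) measurableSet_Ioi
        beta_reduce
        rw [mul_assoc (K * M), ← Real.exp_add, show D + -(1:ℝ) * x = D - x by ring]
      exact h1.congr_fun (fun x hx => by simp [hBdef, not_le.mpr hx.out]) measurableSet_Ioi
  have htop : Tendsto B atTop (nhds 0) := by
    have h1 : Tendsto (fun x : ℝ => K * M * Real.exp (D - x)) atTop (nhds 0) := by
      have : Tendsto (fun x : ℝ => Real.exp (D - x)) atTop (nhds 0) := by
        have h4 : Tendsto (fun x : ℝ => D + -x) atTop atBot :=
          tendsto_atBot_add_const_left _ D tendsto_neg_atTop_atBot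
        exact Real.tendsto_exp_atBot.comp (h4.congr (fun x => by ring))
      simpa using this.const_mul (K * M)
    apply h1.congr'
    filter_upwards [eventually_gt_atTop (0:ℝ)] with x hx
    simp [hBdef, not_le.mpr hx]
  have hbot : Tendsto B atBot (nhds 0) := by
    have h1 : Tendsto (fun x : ℝ => K * M * Real.exp ((β.re - C) * x)) atBot (nhds 0) := by
      have : Tendsto (fun x : ℝ => Real.exp ((β.re - C) * x)) atBot (nhds 0) := by
        apply Real.tendsto_exp_atBot.comp
        exact Tendsto.const_mul_atBot hb1 tendsto_id
      simpa using this.const_mul (K * M)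
    apply h1.congr'
    filter_upwards [eventually_le_atBot (0:ℝ)] with x hx
    simp [hBdef, hx]
  -- the substitution step
  have key : ∀ w' : ℂ, w' ≠ 0 →
      (∫ y in Set.Ioi (0:ℝ), g ((y:ℂ) * w') * (y:ℂ) ^ (β - 1))
        = ∫ x : ℝ, g (Complex.exp x * w') * Complex.exp (β * x) := by
    intro w' _
    rw [subst_exp (fun u : ℝ => g ((u:ℂ) * w') * (u:ℂ) ^ (β - 1))]
    congr 1 with x
    have hx : ((Real.exp x : ℝ) : ℂ) = Complex.exp (x:ℂ) := Complex.ofReal_exp x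
    have hpow : ((Real.exp x : ℝ) : ℂ) ^ (β - 1) = Complex.exp ((x:ℂ) * (β - 1)) := by
      rw [hx, Complex.cpow_def_of_ne_zero (Complex.exp_ne_zero _),
        Complex.log_exp (by simp [Real.pi_pos]) (by simp [Real.pi_pos.le])]
    have hpow' : Complex.exp (x:ℂ) ^ (β - 1) = Complex.exp ((x:ℂ) * (β - 1)) := by
      rw [← hx]; exact hpow
    simp only [Complex.real_smul, Complex.ofReal_exp, hpow']
    rw [show Complex.exp (x:ℂ) * (g (Complex.exp (x:ℂ) * w') * Complex.exp ((x:ℂ) * (β - 1)))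
        = g (Complex.exp (x:ℂ) * w') * (Complex.exp (x:ℂ) * Complex.exp ((x:ℂ) * (β - 1)))
      from by ring, ← Complex.exp_add]
    congr 2
    ring
  -- assemble
  calc ∫ y in Set.Ioi (0:ℝ), g ((y:ℂ) * (1 - I * ξ)) * (y:ℂ) ^ (β - 1)
      = ∫ x : ℝ, g (Complex.exp x * w) * Complex.exp (β * x) := key w hw0
    _ = ∫ x : ℝ, Complex.exp (Complex.log w * (-β)) * f ((x:ℂ) + Complex.log w) := by
        congr 1 with x
        have he : Complex.exp ((x:ℂ) + Complex.log w) = Complex.exp x * w := by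
          rw [Complex.exp_add, Complex.exp_log hw0]
        have e2 : Complex.exp (Complex.log w * (-β)) * Complex.exp (β * ((x:ℂ) + Complex.log w))
            = Complex.exp (β * x) := by
          rw [← Complex.exp_add]; congr 1; ring
        simp only [hfdef, he]
        rw [← e2]; ring
    _ = Complex.exp (Complex.log w * (-β)) * ∫ x : ℝ, f ((x:ℂ) + Complex.log w) :=
        integral_const_mul _ _
    _ = Complex.exp (Complex.log w * (-β)) * ∫ x : ℝ, f ((x:ℂ) + θ * I) := by
        congr 1
        have hlog : Complex.log w = ((Complex.log w).re : ℂ) + (θ:ℂ) * I := by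
          conv_lhs => rw [← Complex.re_add_im (Complex.log w)]
          rw [Complex.log_im]
        calc ∫ x : ℝ, f ((x:ℂ) + Complex.log w)
            = ∫ x : ℝ, (fun t : ℝ => f ((t:ℂ) + (θ:ℂ) * I)) (x + (Complex.log w).re) := by
              congr 1 with x
              show f ((x:ℂ) + Complex.log w) = f ((↑(x + (Complex.log w).re) : ℂ) + (θ:ℂ) * I)
              congr 1
              conv_lhs => rw [hlog]
              push_cast
              ring
          _ = ∫ x : ℝ, f ((x:ℂ) + θ * I) :=
              integral_add_right_eq_self (fun t : ℝ => f ((t:ℂ) + (θ:ℂ) * I)) _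
    _ = Complex.exp (Complex.log w * (-β)) * ∫ x : ℝ, f (x:ℂ) := by
        rw [strip_shift f θ B hdf hB hBi htop hbot]
    _ = (1 - I * ξ) ^ (-β) * ∫ u in Set.Ioi (0:ℝ), g (u:ℂ) * (u:ℂ) ^ (β - 1) := by
        rw [show ((1:ℂ) - I * ξ) ^ (-β) = Complex.exp (Complex.log w * (-β)) from
          Complex.cpow_def_of_ne_zero hw0 _]
        congr 1
        have hk := key 1 one_ne_zero
        simp only [mul_one] at hk
        rw [hk]
end
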